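/- Let m be even, m ≥ 4, and f(x) = x^{2^{m/2}+1} on F_{2^m}. For any a ∈ F_{2^m} and b ∈ F_{2^m}, the square of the Walsh sum satisfies: W_f(a,b)² = 2^m · W_f(a,b) if a ∈ F_{2^{m/2}}, and W_f(a,b)² = 2^m otherwise. -/

import Mathlib

open Finset
open scoped Classical

noncomputable instance (m : ℕ) : Fintype (GaloisField 2 m) := Fintype.ofFinite _

/-- Absolute trace from `GF(2^m)` to `F_2`. -/
noncomputable def Tr (m : ℕ) : GaloisField 2 m → ZMod 2 :=
  Algebra.trace (ZMod 2) (GaloisField 2 m)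

/-- Walsh transform `W_f(a,b) = Σ_x (-1)^{Tr(a f(x) + b x)}`. -/
noncomputable def Walsh (m : ℕ) (f : GaloisField 2 m → GaloisField 2 m)
    (a b : GaloisField 2 m) : ℤ :=
  ∑ x : GaloisField 2 m, (-1 : ℤ) ^ (Tr m (a * f x + b * x)).val

section Aux

variable (m : ℕ)

lemma Tr_add (u v : GaloisField 2 m) : Tr m (u + v) = Tr m u + Tr m v := by
  simp [Tr, map_add]

lemma Tr_zero : Tr m 0 = 0 := by simp [Tr]

lemma Tr_sq (u : GaloisField 2 m) : Tr m (u ^ 2) = Tr m u := by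
  have key : algebraMap (ZMod 2) (GaloisField 2 m) (Tr m (u ^ 2))
      = algebraMap (ZMod 2) (GaloisField 2 m) (Tr m u) := by
    unfold Tr
    rw [trace_eq_sum_automorphisms, trace_eq_sum_automorphisms]
    have : ∀ σ : GaloisField 2 m ≃ₐ[ZMod 2] GaloisField 2 m,
        σ (u ^ 2) = (frobenius (GaloisField 2 m) 2) (σ u) := by
      intro σ; simp [frobenius_def, map_pow]
    rw [Finset.sum_congr rfl fun σ _ => this σ, ← map_sum (frobenius (GaloisField 2 m) 2),
      frobenius_def]
    have h2 : (∑ σ : GaloisField 2 m ≃ₐ[ZMod 2] GaloisField 2 m, σ u)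
        = algebraMap (ZMod 2) (GaloisField 2 m) (Tr m u) := by
      unfold Tr; rw [trace_eq_sum_automorphisms]
    rw [h2, ← map_pow]
    congr 1
    have : ∀ t : ZMod 2, t ^ 2 = t := by decide
    exact this _
  exact (algebraMap (ZMod 2) (GaloisField 2 m)).injective key

lemma Tr_pow2 (k : ℕ) (u : GaloisField 2 m) : Tr m (u ^ 2 ^ k) = Tr m u := by
  induction k with
  | zero => simp
  | succ k ih =>
    have : u ^ 2 ^ (k + 1) = (u ^ 2 ^ k) ^ 2 := by
      rw [← pow_mul, pow_succ]
    rw [this, Tr_sq, ih]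

/-- The character value. -/
noncomputable def chi (t : GaloisField 2 m) : ℤ := (-1 : ℤ) ^ (Tr m t).val

lemma chi_add (u v : GaloisField 2 m) : chi m (u + v) = chi m u * chi m v := by
  rw [chi, chi, chi, Tr_add, ← pow_add]
  have : ∀ s t : ZMod 2, (-1 : ℤ) ^ (s + t).val = (-1 : ℤ) ^ (s.val + t.val) := by decide
  exact this _ _

lemma chi_zero : chi m 0 = 1 := by simp [chi, Tr_zero]

lemma char_sum_zero (hm0 : m ≠ 0) {c : GaloisField 2 m} (hc : c ≠ 0) :
    ∑ y : GaloisField 2 m, chi m (c * y) = 0 := by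
  obtain ⟨y₀, hy₀⟩ : ∃ y₀ : GaloisField 2 m, Tr m (c * y₀) ≠ 0 := by
    by_contra h
    push_neg at h
    have hnd := traceForm_nondegenerate (ZMod 2) (GaloisField 2 m)
    exact hc (hnd.1 c (fun y => by
      rw [Algebra.traceForm_apply]
      exact h y))
  have hval : chi m (c * y₀) = -1 := by
    have h1 : ∀ t : ZMod 2, t ≠ 0 → (-1 : ℤ) ^ t.val = -1 := by decide
    exact h1 _ hy₀
  have key : (∑ y : GaloisField 2 m, chi m (c * y))
      = ∑ y : GaloisField 2 m, chi m (c * (y + y₀)) :=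
    (Fintype.sum_equiv (Equiv.addRight y₀) _ _ (fun y => rfl)).symm
  have key2 : (∑ y : GaloisField 2 m, chi m (c * (y + y₀)))
      = - ∑ y : GaloisField 2 m, chi m (c * y) := by
    rw [← Finset.sum_neg_distrib]
    refine Finset.sum_congr rfl fun y _ => ?_
    rw [mul_add, chi_add, hval]
    ring
  have := key.trans key2
  linarith

lemma char_sum_all (hm0 : m ≠ 0) :
    ∑ y : GaloisField 2 m, chi m ((0 : GaloisField 2 m) * y) = 2 ^ m := by
  have hcard := GaloisField.card 2 m hm0
  simp only [zero_mul, chi_zero, Finset.sum_const, Finset.card_univ, smul_eq_mul, mul_one,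
    ← Nat.card_eq_fintype_card, hcard]
  push_cast
  ring

end Aux

/-- Square of the Walsh sum of `x ↦ x^{2^{m/2}+1}`. -/
theorem stmt3 (m : ℕ) (hm : Even m) (hm4 : 4 ≤ m)
    (a b : GaloisField 2 m) :
    (a ^ 2 ^ (m / 2) = a →
      (Walsh m (fun x => x ^ (2 ^ (m / 2) + 1)) a b) ^ 2
        = 2 ^ m * Walsh m (fun x => x ^ (2 ^ (m / 2) + 1)) a b)
    ∧ (a ^ 2 ^ (m / 2) ≠ a →
      (Walsh m (fun x => x ^ (2 ^ (m / 2) + 1)) a b) ^ 2 = 2 ^ m) := by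
  haveI : Fact (Nat.Prime 2) := ⟨Nat.prime_two⟩
  have hm0 : m ≠ 0 := by omega
  set q : ℕ := 2 ^ (m / 2) with hq
  have hqq : q * q = 2 ^ m := by
    obtain ⟨k, hk⟩ := hm
    rw [hq, ← pow_add]
    congr 1
    omega
  have h2 : (2 : GaloisField 2 m) = 0 := by
    have : CharP (GaloisField 2 m) 2 := inferInstance
    exact CharP.cast_eq_zero (GaloisField 2 m) 2
  have hx : ∀ x : GaloisField 2 m, x ^ (2 ^ m) = x := by
    intro x
    have := FiniteField.pow_card x
    rwa [← Nat.card_eq_fintype_card, GaloisField.card 2 m hm0] at this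
  have hfrob : ∀ x z : GaloisField 2 m, (x + z) ^ q = x ^ q + z ^ q := fun x z =>
    add_pow_char_pow x z 2 (m / 2)
  -- the function values
  set t : GaloisField 2 m → ℤ := fun x => chi m (a * x ^ (q + 1) + b * x) with ht
  have hW : Walsh m (fun x => x ^ (q + 1)) a b = ∑ x : GaloisField 2 m, t x := rfl
  set T : GaloisField 2 m → GaloisField 2 m := fun z => a * z ^ (q + 1) + b * z with hT
  set c : GaloisField 2 m → GaloisField 2 m := fun z => (a + a ^ q) * z ^ q with hc
  -- trace frobenius step
  have htrf : ∀ x z : GaloisField 2 m, Tr m (a * x ^ q * z) = Tr m (a ^ q * (z ^ q * x)) := by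
    intro x z
    rw [← Tr_pow2 m (m / 2) (a * x ^ q * z)]
    congr 1
    rw [mul_pow, mul_pow, ← pow_mul, hqq, hx x, ← hq]
    ring
  -- key pointwise identity
  have hpoint : ∀ x z : GaloisField 2 m, t x * t (x + z) = chi m (T z) * chi m (c z * x) := by
    intro x z
    rw [ht, ← chi_add, ← chi_add]
    simp only [chi]
    congr 1
    have expand : (x + z) ^ (q + 1)
        = x ^ (q + 1) + x ^ q * z + z ^ q * x + z ^ (q + 1) := by
      rw [pow_succ, hfrob, pow_succ, pow_succ]
      ring
    have hargs : a * x ^ (q + 1) + b * x + (a * (x + z) ^ (q + 1) + b * (x + z))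
        = a * x ^ q * z + (a * (z ^ q * x) + T z) := by
      rw [expand, hT]
      linear_combination (a * x ^ (q + 1) + b * x) * h2
    rw [hargs, Tr_add, htrf, ← Tr_add]
    congr 1
    rw [hT, hc]
    ring
  -- square expansion
  have hsq : (∑ x : GaloisField 2 m, t x) ^ 2 = ∑ z : GaloisField 2 m, chi m (T z) * ∑ x : GaloisField 2 m, chi m (c z * x) := by
    rw [sq, Finset.sum_mul_sum]
    have step1 : ∀ x : GaloisField 2 m, (∑ y : GaloisField 2 m, t x * t y) = ∑ z : GaloisField 2 m, t x * t (x + z) := by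
      intro x
      exact (Fintype.sum_equiv (Equiv.addLeft x) _ _ (fun z => rfl)).symm
    calc (∑ x : GaloisField 2 m, ∑ y : GaloisField 2 m, t x * t y)
        = ∑ x : GaloisField 2 m, ∑ z : GaloisField 2 m, t x * t (x + z) := Finset.sum_congr rfl fun x _ => step1 x
      _ = ∑ x : GaloisField 2 m, ∑ z : GaloisField 2 m, chi m (T z) * chi m (c z * x) :=
          Finset.sum_congr rfl fun x _ => Finset.sum_congr rfl fun z _ => hpoint x z
      _ = ∑ z : GaloisField 2 m, ∑ x : GaloisField 2 m, chi m (T z) * chi m (c z * x) := Finset.sum_comm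
      _ = ∑ z : GaloisField 2 m, chi m (T z) * ∑ x : GaloisField 2 m, chi m (c z * x) := by
          exact Finset.sum_congr rfl fun z _ => (Finset.mul_sum _ _ _).symm
  constructor
  · intro ha
    have hc0 : ∀ z : GaloisField 2 m, c z = 0 := by
      intro z
      rw [hc, ha]
      linear_combination a * z ^ q * h2
    rw [hW, hsq]
    have : ∀ z : GaloisField 2 m, chi m (T z) * ∑ x : GaloisField 2 m, chi m (c z * x) = 2 ^ m * chi m (T z) := by
      intro z
      rw [hc0 z]
      rw [char_sum_all m hm0]
      ring
    rw [Finset.sum_congr rfl fun z _ => this z, ← Finset.mul_sum]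
  · intro ha
    have hca : a + a ^ q ≠ 0 := by
      intro h
      apply ha
      have h1 := neg_eq_of_add_eq_zero_left h
      rw [CharTwo.neg_eq] at h1
      exact h1
    rw [hW, hsq]
    rw [Finset.sum_eq_single (0 : GaloisField 2 m)]
    · have hT0 : T 0 = 0 := by
        rw [hT]
        simp [pow_succ]
      rw [hT0, chi_zero, one_mul]
      have hqne : q ≠ 0 := by positivity
      have : c 0 = 0 := by
        show (a + a ^ q) * (0 : GaloisField 2 m) ^ q = 0
        rw [zero_pow hqne, mul_zero]
      rw [this, char_sum_all m hm0]
    · intro z _ hz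
      have hcz : c z ≠ 0 := by
        rw [hc]
        apply mul_ne_zero hca
        intro h
        apply hz
        have hqne : q ≠ 0 := by positivity
        exact pow_eq_zero_iff hqne |>.mp h
      rw [char_sum_zero m hm0 hcz, mul_zero]
    · intro h
      exact absurd (Finset.mem_univ _) h
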